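/- Suppose f has strong convexity parameter μ_f ≥ 0 and Ψ has strong convexity parameter μ_Ψ ≥ 0. Let L > 0 and x ∈ ℝ^n, suppose the descent condition holds at x with constant L, and define the extended composite gradient mapping g_L(x) = (L + μ_Ψ)(x − T_L(x)). Then for every y ∈ ℝ^n: F(y) ≥ F(T_L(x)) + (1/(2(L + μ_Ψ)))‖g_L(x)‖² + ⟨g_L(x), y − x⟩ + ((μ_f + μ_Ψ)/2)‖y − x‖². -/

import Mathlib

open Set
open scoped RealInnerProductSpace

/-- `Euc n` is the Euclidean space `ℝ^n`. -/
abbrev Euc (n : ℕ) := EuclideanSpace ℝ (Fin n)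

/-- Auxiliary: if `c * (1 - t) ≤ C` for all `t ∈ (0,1)`, then `c ≤ C`. -/
lemma aux_onele (c C : ℝ) (h : ∀ t ∈ Ioo (0:ℝ) 1, c * (1 - t) ≤ C) : c ≤ C := by
  by_contra hc
  push_neg at hc
  have h2 := h (1/2) (by norm_num)
  have hc0 : 0 < c := by linarith
  have ht : (c - C) / (2 * c) ∈ Ioo (0:ℝ) 1 := by
    constructor
    · exact div_pos (by linarith) (by linarith)
    · rw [div_lt_one (by linarith)]; linarith
  have h3 := h _ ht
  have h4 : c * (1 - (c - C) / (2 * c)) = (c + C) / 2 := by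
    field_simp; ring
  rw [h4] at h3
  linarith

set_option maxHeartbeats 1000000 in
/-- Lemma 4: if `f` and `Ψ` have strong convexity parameters
`μ_f ≥ 0` and `μ_Ψ ≥ 0`, the descent condition holds at `x` with constant `L > 0`, and
`g_L(x) = (L + μ_Ψ)(x − T_L(x))`, then for every `y`:
`F(y) ≥ F(T_L(x)) + (1/(2(L+μ_Ψ)))‖g_L(x)‖² + ⟪g_L(x), y − x⟫ + ((μ_f+μ_Ψ)/2)‖y − x‖²`. -/
theorem strongly_convex_composite_lower_bound {n : ℕ}
    (f Ψ F : Euc n → ℝ) (f' : Euc n → Euc n)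
    (hf' : ∀ z, HasGradientAt f (f' z) z)
    (μf μΨ : ℝ) (hμf : 0 ≤ μf) (hμΨ : 0 ≤ μΨ)
    (hf : StrongConvexOn Set.univ μf f)
    (hΨ : StrongConvexOn Set.univ μΨ Ψ)
    (hΨlsc : LowerSemicontinuous Ψ)
    (hF : ∀ z, F z = f z + Ψ z)
    (L : ℝ) (hL : 0 < L) (x T : Euc n)
    (hT : ∀ y, f x + ⟪f' x, T - x⟫ + L / 2 * ‖T - x‖ ^ 2 + Ψ T
        ≤ f x + ⟪f' x, y - x⟫ + L / 2 * ‖y - x‖ ^ 2 + Ψ y)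
    (hdesc : f T ≤ f x + ⟪f' x, T - x⟫ + L / 2 * ‖T - x‖ ^ 2) :
    ∀ y, F y ≥ F T + 1 / (2 * (L + μΨ)) * ‖(L + μΨ) • (x - T)‖ ^ 2
        + ⟪(L + μΨ) • (x - T), y - x⟫ + (μf + μΨ) / 2 * ‖y - x‖ ^ 2 := by
  intro y
  have hM : 0 < L + μΨ := by linarith
  -- Part A: strong convexity of f and the gradient give a lower bound on f y
  have hA : f x + ⟪f' x, y - x⟫ + μf / 2 * ‖y - x‖ ^ 2 ≤ f y := by
    set g : ℝ → ℝ := fun t => f (x + t • (y - x)) with hg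
    have hline : HasDerivAt (fun t : ℝ => x + t • (y - x)) (y - x) 0 := by
      simpa using ((hasDerivAt_id (0:ℝ)).smul_const (y - x)).const_add x
    have hd : HasDerivAt g ⟪f' x, y - x⟫ 0 := by
      have h0 : HasFDerivAt f (InnerProductSpace.toDual ℝ _ (f' x)) (x + (0:ℝ) • (y - x)) := by
        simpa using (hf' x).hasFDerivAt
      have h3 := h0.comp_hasDerivAt 0 hline
      simp only [InnerProductSpace.toDual_apply_apply] at h3
      exact h3
    rw [hasDerivAt_iff_tendsto_slope] at hd
    have hmono : (nhdsWithin (0:ℝ) (Ioi 0)) ≤ nhdsWithin (0:ℝ) {(0:ℝ)}ᶜ :=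
      nhdsWithin_mono 0 (fun t ht => ne_of_gt ht)
    have h2 : Filter.Tendsto (fun t : ℝ => μf / 2 * (1 - t) * ‖y - x‖ ^ 2)
        (nhdsWithin (0:ℝ) (Ioi 0)) (nhds (μf / 2 * ‖y - x‖ ^ 2)) := by
      have hc : Continuous fun t : ℝ => μf / 2 * (1 - t) * ‖y - x‖ ^ 2 := by continuity
      have := (hc.tendsto 0).mono_left (nhdsWithin_le_nhds (s := Ioi (0:ℝ)))
      simpa using this
    have htend : Filter.Tendsto (fun t => slope g 0 t + μf / 2 * (1 - t) * ‖y - x‖ ^ 2)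
        (nhdsWithin (0:ℝ) (Ioi 0)) (nhds (⟪f' x, y - x⟫ + μf / 2 * ‖y - x‖ ^ 2)) :=
      (hd.mono_left hmono).add h2
    have hev : ∀ᶠ t in nhdsWithin (0:ℝ) (Ioi 0),
        slope g 0 t + μf / 2 * (1 - t) * ‖y - x‖ ^ 2 ≤ f y - f x := by
      filter_upwards [Ioo_mem_nhdsGT_of_mem (⟨le_refl (0:ℝ), zero_lt_one⟩ : (0:ℝ) ∈ Ico (0:ℝ) 1)]
        with t ht
      obtain ⟨ht0, ht1⟩ := ht
      have hcv := hf.2 (mem_univ y) (mem_univ x) ht0.le (by linarith : (0:ℝ) ≤ 1 - t)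
        (by ring : t + (1 - t) = 1)
      simp only [smul_eq_mul] at hcv
      have hz : t • y + (1 - t) • x = x + t • (y - x) := by module
      rw [hz] at hcv
      have hslope : slope g 0 t = (f (x + t • (y - x)) - f x) / t := by
        rw [slope_def_field]; simp [hg]
      rw [hslope]
      have hdiv : (f (x + t • (y - x)) - f x) / t
          ≤ (f y - f x) - μf / 2 * (1 - t) * ‖y - x‖ ^ 2 := by
        rw [div_le_iff₀ ht0]
        linarith [hcv]
      linarith
    have := le_of_tendsto htend hev
    linarith
  -- Part B: strong convexity of the proximal objective at its minimizer T
  have hB : ⟪f' x, T - x⟫ + L / 2 * ‖T - x‖ ^ 2 + Ψ T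
      + (L + μΨ) / 2 * (‖y - x‖ ^ 2 - 2 * ⟪y - x, T - x⟫ + ‖T - x‖ ^ 2)
      ≤ ⟪f' x, y - x⟫ + L / 2 * ‖y - x‖ ^ 2 + Ψ y := by
    have key : ∀ t ∈ Ioo (0:ℝ) 1,
        ((L + μΨ) / 2 * (‖y - x‖ ^ 2 - 2 * ⟪y - x, T - x⟫ + ‖T - x‖ ^ 2)) * (1 - t)
        ≤ (⟪f' x, y - x⟫ + L / 2 * ‖y - x‖ ^ 2 + Ψ y)
          - (⟪f' x, T - x⟫ + L / 2 * ‖T - x‖ ^ 2 + Ψ T) := by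
      intro t ht
      obtain ⟨ht0, ht1⟩ := ht
      set z := T + t • (y - T) with hzdef
      have h1 := hT z
      have h2 := hΨ.2 (mem_univ y) (mem_univ T) ht0.le (by linarith : (0:ℝ) ≤ 1 - t)
        (by ring : t + (1 - t) = 1)
      simp only [smul_eq_mul] at h2
      have hz : t • y + (1 - t) • T = z := by rw [hzdef]; module
      rw [hz] at h2
      have hzx : z - x = t • (y - x) + (1 - t) • (T - x) := by rw [hzdef]; module
      have e1 : ⟪f' x, z - x⟫ = t * ⟪f' x, y - x⟫ + (1 - t) * ⟪f' x, T - x⟫ := by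
        rw [hzx, inner_add_right, real_inner_smul_right, real_inner_smul_right]
      have e2 : ‖z - x‖ ^ 2 = t ^ 2 * ‖y - x‖ ^ 2 + 2 * (t * (1 - t)) * ⟪y - x, T - x⟫
          + (1 - t) ^ 2 * ‖T - x‖ ^ 2 := by
        rw [hzx, norm_add_sq_real, real_inner_smul_left, real_inner_smul_right,
          norm_smul, norm_smul, Real.norm_of_nonneg ht0.le,
          Real.norm_of_nonneg (by linarith : (0:ℝ) ≤ 1 - t), mul_pow, mul_pow]
        ring
      have e3 : ‖y - T‖ ^ 2 = ‖y - x‖ ^ 2 - 2 * ⟪y - x, T - x⟫ + ‖T - x‖ ^ 2 := by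
        have hyT : y - T = (y - x) - (T - x) := by abel
        rw [hyT, norm_sub_sq_real]
      rw [e1, e2] at h1
      rw [e3] at h2
      have hmul : t * (((L + μΨ) / 2 * (‖y - x‖ ^ 2 - 2 * ⟪y - x, T - x⟫ + ‖T - x‖ ^ 2)) * (1 - t))
          ≤ t * ((⟪f' x, y - x⟫ + L / 2 * ‖y - x‖ ^ 2 + Ψ y)
            - (⟪f' x, T - x⟫ + L / 2 * ‖T - x‖ ^ 2 + Ψ T)) := by
        linarith [h1, h2]
      exact le_of_mul_le_mul_left hmul ht0
    have := aux_onele _ _ key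
    linarith
  -- Putting everything together
  have hnorm : ‖(L + μΨ) • (x - T)‖ ^ 2 = (L + μΨ) ^ 2 * ‖x - T‖ ^ 2 := by
    rw [norm_smul, Real.norm_of_nonneg hM.le, mul_pow]
  have h1 : 1 / (2 * (L + μΨ)) * ‖(L + μΨ) • (x - T)‖ ^ 2 = (L + μΨ) / 2 * ‖x - T‖ ^ 2 := by
    rw [hnorm]; field_simp
  have hip : ⟪(L + μΨ) • (x - T), y - x⟫ = (L + μΨ) * ⟪x - T, y - x⟫ :=
    real_inner_smul_left _ _ _
  have hTx : ‖T - x‖ ^ 2 = ‖x - T‖ ^ 2 := by rw [← norm_neg]; congr 1; abel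
  have hip2 : ⟪y - x, T - x⟫ = - ⟪x - T, y - x⟫ := by
    rw [show T - x = -(x - T) from by abel, inner_neg_right, real_inner_comm]
  rw [hF y, hF T, h1, hip]
  rw [hTx, hip2] at hB
  rw [hTx] at hdesc
  linarith [hA, hB, hdesc]
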